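/- arXiv:2306.08324 — 2 statements merged into one kernel-verified Lean document; each statement's English description precedes it below -/
import Mathlib

section
/- Let H ∈ (1/2, 1) and t > 0. Then ∫∫_{ℝ²} |yz|^{H−3/2} · 1_{(−∞,−3t]}(y) · 1_{[−t,t]}(y+z) dy dz ≤ (1/(1−H)) · t^{2H−1}. -/
open MeasureTheory Real Set ENNReal

/-- estimate of the singular double integral over the region
{y ≤ -3t, -t ≤ y+z ≤ t}. -/
theorem stmt_5 (H t : ℝ) (hH : H ∈ Set.Ioo (1/2 : ℝ) 1) (ht : 0 < t) :
    (∫⁻ p : ℝ × ℝ,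
        Set.indicator {p : ℝ × ℝ | p.1 ≤ -(3*t) ∧ p.1 + p.2 ∈ Set.Icc (-t) t}
          (fun p => ENNReal.ofReal (|p.1 * p.2| ^ (H - 3/2))) p)
      ≤ ENNReal.ofReal (1 / (1 - H) * t ^ (2*H - 1)) := by
  obtain ⟨hH1, hH2⟩ := hH
  set c : ℝ := 2*H - 3 with hc
  have hclt : c < -1 := by rw [hc]; linarith
  set S : Set (ℝ × ℝ) := {p : ℝ × ℝ | p.1 ≤ -(3*t) ∧ p.1 + p.2 ∈ Set.Icc (-t) t} with hS
  set g : ℝ × ℝ → ℝ≥0∞ := fun p => ENNReal.ofReal ((-t - p.1) ^ c) with hg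
  -- pointwise bound
  have hmono : ∀ p : ℝ × ℝ,
      S.indicator (fun p => ENNReal.ofReal (|p.1 * p.2| ^ (H - 3/2))) p
        ≤ S.indicator g p := by
    intro p
    by_cases hp : p ∈ S
    · rw [Set.indicator_of_mem hp, Set.indicator_of_mem hp]
      obtain ⟨h1, h2, h3⟩ := hp
      have hy : (0:ℝ) < -t - p.1 := by linarith
      have hz : -t - p.1 ≤ p.2 := by linarith
      have hzpos : (0:ℝ) < p.2 := by linarith
      have habs : |p.1 * p.2| = (-p.1) * p.2 := by
        rw [abs_mul, abs_of_nonpos (by linarith), abs_of_pos hzpos]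
      apply ENNReal.ofReal_le_ofReal
      rw [habs, Real.mul_rpow (by linarith) hzpos.le]
      have e1 : (-p.1 : ℝ) ^ (H - 3/2) ≤ (-t - p.1) ^ (H - 3/2) :=
        Real.rpow_le_rpow_of_nonpos hy (by linarith) (by linarith)
      have e2 : p.2 ^ (H - 3/2) ≤ (-t - p.1) ^ (H - 3/2) :=
        Real.rpow_le_rpow_of_nonpos hy hz (by linarith)
      calc (-p.1)^(H-3/2) * p.2^(H-3/2)
          ≤ (-t - p.1)^(H-3/2) * (-t - p.1)^(H-3/2) :=
            mul_le_mul e1 e2 (Real.rpow_nonneg hzpos.le _) (Real.rpow_nonneg hy.le _)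
        _ = (-t - p.1) ^ c := by
            rw [← Real.rpow_add hy]; norm_num [hc]; ring_nf
    · rw [Set.indicator_of_notMem hp, Set.indicator_of_notMem hp]
  refine le_trans (lintegral_mono hmono) ?_
  have hSm : MeasurableSet S := by
    exact (measurableSet_le measurable_fst measurable_const).inter
      ((measurable_fst.add measurable_snd) measurableSet_Icc)
  have hgm : Measurable g :=
    ((measurable_const.sub measurable_fst).pow measurable_const).ennreal_ofReal
  have hmeas : Measurable fun p : ℝ × ℝ => S.indicator g p := hgm.indicator hSm
  rw [MeasureTheory.Measure.volume_eq_prod, MeasureTheory.lintegral_prod _ hmeas.aemeasurable]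
  -- inner integral
  have inner : ∀ y : ℝ, (∫⁻ z, S.indicator g (y, z))
      = (Set.Iic (-(3*t))).indicator
          (fun y => ENNReal.ofReal ((-t - y) ^ c) * ENNReal.ofReal (2*t)) y := by
    intro y
    by_cases hy : y ≤ -(3*t)
    · have heq : ∀ z, S.indicator g (y, z)
          = (Set.Icc (-t - y) (t - y)).indicator
              (fun _ => ENNReal.ofReal ((-t - y) ^ c)) z := by
        intro z
        by_cases hz : z ∈ Set.Icc (-t - y) (t - y)
        · rw [Set.indicator_of_mem hz, Set.indicator_of_mem]
          exact ⟨hy, by constructor <;> [linarith [hz.1]; linarith [hz.2]]⟩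
        · rw [Set.indicator_of_notMem hz, Set.indicator_of_notMem]
          intro hmem
          exact hz ⟨by linarith [hmem.2.1], by linarith [hmem.2.2]⟩
      simp_rw [heq]
      rw [lintegral_indicator measurableSet_Icc, setLIntegral_const,
        Real.volume_Icc, Set.indicator_of_mem (Set.mem_Iic.mpr hy)]
      congr 1
      congr 1
      ring
    · rw [Set.indicator_of_notMem (fun h => hy (Set.mem_Iic.mp h))]
      have heq : ∀ z, S.indicator g (y, z) = 0 := by
        intro z
        apply Set.indicator_of_notMem
        intro hmem
        exact hy hmem.1
      simp_rw [heq, lintegral_zero]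
  rw [lintegral_congr inner, lintegral_indicator measurableSet_Iic,
    lintegral_mul_const' _ _ ENNReal.ofReal_ne_top]
  -- substitution x = -t - y
  have hmp : MeasurePreserving (fun y : ℝ => -t - y) volume volume :=
    Measure.measurePreserving_sub_left volume (-t)
  have hfm : Measurable fun x : ℝ => ENNReal.ofReal (x ^ c) :=
    (measurable_id.pow measurable_const).ennreal_ofReal
  have hpre : (fun y : ℝ => -t - y) ⁻¹' (Set.Ici (2*t)) = Set.Iic (-(3*t)) := by
    ext y
    simp only [Set.mem_preimage, Set.mem_Ici, Set.mem_Iic]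
    constructor <;> intro h <;> linarith
  have hsub : (∫⁻ y in Set.Iic (-(3*t)), ENNReal.ofReal ((-t - y) ^ c))
      = ∫⁻ x in Set.Ici (2*t), ENNReal.ofReal (x ^ c) := by
    rw [← hpre]
    exact hmp.setLIntegral_comp_preimage measurableSet_Ici hfm
  rw [hsub, ← setLIntegral_congr (Ioi_ae_eq_Ici (a := 2*t) (μ := volume))]
  have h2t : (0:ℝ) < 2*t := by linarith
  have hint : IntegrableOn (fun x : ℝ => x ^ c) (Set.Ioi (2*t)) :=
    integrableOn_Ioi_rpow_of_lt hclt h2t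
  have hnn : (0:ℝ→ℝ) ≤ᵐ[volume.restrict (Set.Ioi (2*t))] fun x => x ^ c := by
    filter_upwards [ae_restrict_mem measurableSet_Ioi] with x hx
    exact Real.rpow_nonneg (le_of_lt (lt_trans h2t hx)) c
  rw [← MeasureTheory.ofReal_integral_eq_lintegral_ofReal hint hnn,
    integral_Ioi_rpow_of_lt hclt h2t, ← ENNReal.ofReal_mul' (by linarith : (0:ℝ) ≤ 2*t)]
  apply ENNReal.ofReal_le_ofReal
  -- final real inequality
  have hc1 : c + 1 = 2*H - 2 := by rw [hc]; ring
  have hX : (2*t) ^ (c+1) * (2*t) = (2*t) ^ (2*H - 1) := by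
    rw [← Real.rpow_add_one (ne_of_gt h2t) (c+1)]
    congr 1
    rw [hc]; ring
  have h2 : (2*t) ^ (2*H-1) = 2 ^ (2*H-1) * t ^ (2*H-1) :=
    Real.mul_rpow (by norm_num) ht.le
  have h3 : (2:ℝ) ^ (2*H-1) ≤ 2 := by
    calc (2:ℝ) ^ (2*H-1) ≤ 2 ^ (1:ℝ) :=
          Real.rpow_le_rpow_of_exponent_le one_le_two (by linarith)
      _ = 2 := Real.rpow_one 2
  have htp : (0:ℝ) < t ^ (2*H-1) := Real.rpow_pos_of_pos ht _
  have hXpos : (0:ℝ) < (2*t) ^ (c+1) := Real.rpow_pos_of_pos h2t _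
  have e : -(2*t) ^ (c+1) / (c+1) * (2*t) = 2 ^ (2*H-1) * t ^ (2*H-1) / (2 - 2*H) := by
    rw [← h2, ← hX, hc1]
    have hne : (2*H - 2 : ℝ) ≠ 0 := by intro h; linarith
    have hne2 : (2 - 2*H : ℝ) ≠ 0 := by intro h; linarith
    field_simp
    ring
    have hne3 : (-1 + H : ℝ) ≠ 0 := by intro h; linarith
    rw [show H * (-1 + H)⁻¹ - (-1 + H)⁻¹ = (-1 + H) * (-1 + H)⁻¹ by ring]
    exact mul_inv_cancel₀ hne3
  rw [e, div_le_iff₀ (by linarith : (0:ℝ) < 2 - 2*H)]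
  have hfr : 1 / (1-H) * t ^ (2*H-1) * (2 - 2*H) = 2 * t ^ (2*H-1) := by
    have : (1 - H : ℝ) ≠ 0 := by intro h; linarith
    field_simp
  rw [hfr]
  nlinarith [h3, htp]
end

section
/- Let H ∈ (1/2, 1). Then the function M_t(x) := (C_H)^{−1}·( (t−x)/|t−x|^{3/2−H} + x/|x|^{3/2−H} ) (interpreted as sign(t−x)|t−x|^{H−1/2} + sign(x)|x|^{H−1/2}, up to the constant) is square integrable on ℝ for every t ∈ ℝ. -/
open MeasureTheory Real Set

/-- Continuity of `y ↦ sign y * |y| ^ α` for `α > 0`. -/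
lemma sign_abs_rpow_continuous {α : ℝ} (hα : 0 < α) :
    Continuous (fun y : ℝ => Real.sign y * |y| ^ α) := by
  have habs : Continuous (fun y : ℝ => |y| ^ α) :=
    continuous_abs.rpow_const (fun x => Or.inr hα.le)
  rw [continuous_iff_continuousAt]
  intro y
  rcases lt_trichotomy y 0 with hy | hy | hy
  · have : (fun z : ℝ => -(|z| ^ α)) =ᶠ[nhds y] (fun z => Real.sign z * |z| ^ α) := by
      filter_upwards [Iio_mem_nhds hy] with z hz
      rw [Real.sign_of_neg hz]; ring
    exact ContinuousAt.congr (habs.neg.continuousAt) this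
  · subst hy
    have h0 : Real.sign (0:ℝ) * |(0:ℝ)| ^ α = 0 := by
      simp [Real.sign_zero]
    unfold ContinuousAt
    simp only [Real.sign_zero, zero_mul]
    apply squeeze_zero_norm (a := fun z : ℝ => |z| ^ α)
    · intro z
      rw [norm_mul]
      have h1 : ‖Real.sign z‖ ≤ 1 := by
        rcases Real.sign_apply_eq z with h | h | h <;> simp [h]
      have h2 : ‖|z| ^ α‖ = |z| ^ α := by
        rw [Real.norm_eq_abs, abs_of_nonneg (Real.rpow_nonneg (abs_nonneg z) α)]
      rw [h2]
      calc ‖Real.sign z‖ * (|z| ^ α) ≤ 1 * (|z| ^ α) :=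
            mul_le_mul_of_nonneg_right h1 (Real.rpow_nonneg (abs_nonneg z) α)
        _ = |z| ^ α := one_mul _
    · have := habs.continuousAt (x := (0:ℝ))
      unfold ContinuousAt at this
      simpa [Real.zero_rpow hα.ne'] using this
  · have : (fun z : ℝ => |z| ^ α) =ᶠ[nhds y] (fun z => Real.sign z * |z| ^ α) := by
      filter_upwards [Ioi_mem_nhds hy] with z hz
      rw [Real.sign_of_pos hz]; ring
    exact ContinuousAt.congr (habs.continuousAt) this

/-- Mean value estimate for `rpow` with exponent in `(0,1)`. -/
lemma rpow_mvt {α m a b : ℝ} (hα0 : 0 < α) (hα1 : α ≤ 1) (hm : 0 < m) (ha : m ≤ a) (hb : m ≤ b) :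
    |a ^ α - b ^ α| ≤ α * m ^ (α - 1) * |a - b| := by
  have key := Convex.norm_image_sub_le_of_norm_hasDerivWithin_le
    (f := fun y : ℝ => y ^ α) (f' := fun y : ℝ => α * y ^ (α - 1))
    (s := Ici m) (C := α * m ^ (α - 1)) (x := b) (y := a)
    (fun y hy => (Real.hasDerivAt_rpow_const
      (Or.inl (ne_of_gt (lt_of_lt_of_le hm hy)))).hasDerivWithinAt)
    (fun y hy => by
      have hypos : 0 < y := lt_of_lt_of_le hm hy
      have h1 : y ^ (α - 1) ≤ m ^ (α - 1) :=
        Real.rpow_le_rpow_of_nonpos hm hy (by linarith)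
      have h2 : (0:ℝ) ≤ α * y ^ (α - 1) :=
        mul_nonneg hα0.le (Real.rpow_nonneg hypos.le _)
      rw [Real.norm_eq_abs, abs_of_nonneg h2]
      exact mul_le_mul_of_nonneg_left h1 hα0.le)
    (convex_Ici m) hb ha
  simpa [Real.norm_eq_abs] using key

/-- the kernel M_t(x) = (C_H)⁻¹(sign(t−x)|t−x|^(H−1/2)
+ sign(x)|x|^(H−1/2)) is square integrable on ℝ. -/
theorem stmt_16 (H C_H : ℝ) (hH : H ∈ Set.Ioo (1/2 : ℝ) 1) (hC : 0 < C_H)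
    (t : ℝ) :
    MemLp (fun x : ℝ =>
        (C_H)⁻¹ * (Real.sign (t - x) * |t - x| ^ (H - 1/2)
          + Real.sign x * |x| ^ (H - 1/2)))
      2 volume := by
  obtain ⟨hH1, hH2⟩ := hH
  set α : ℝ := H - 1/2 with hα_def
  have hα0 : 0 < α := by simp only [hα_def]; linarith
  have hα1 : α < 1/2 := by simp only [hα_def]; linarith
  set f : ℝ → ℝ := fun x =>
    Real.sign (t - x) * |t - x| ^ α + Real.sign x * |x| ^ α with hf_def
  suffices hf : MemLp f 2 volume by exact hf.const_mul _
  -- continuity of f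
  have hcont : Continuous f := by
    have h1 : Continuous (fun x : ℝ => Real.sign (t - x) * |t - x| ^ α) :=
      (sign_abs_rpow_continuous hα0).comp (continuous_const.sub continuous_id)
    exact h1.add (sign_abs_rpow_continuous hα0)
  rw [memLp_two_iff_integrable_sq hcont.aestronglyMeasurable]
  -- tail bound
  set R : ℝ := 2 * |t| + 2 with hR_def
  have hRpos : (0:ℝ) < R := by positivity
  set Ka : ℝ := α * |t| * (2:ℝ) ^ (1 - α) with hKa_def
  have hKa0 : 0 ≤ Ka := by positivity
  have key : ∀ x : ℝ, R ≤ |x| → |f x| ≤ Ka * |x| ^ (α - 1) := by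
    intro x hx
    have hxpos : (0:ℝ) < |x| := lt_of_lt_of_le hRpos hx
    have hx2 : |t| ≤ |x| / 2 - 1 := by
      have : 2 * |t| + 2 ≤ |x| := hx
      linarith
    have hm : (0:ℝ) < |x| / 2 := by linarith
    have hbound : |f x| ≤ α * (|x| / 2) ^ (α - 1) * |t| := by
      rcases lt_or_ge 0 x with hxp | hxn
      · -- x > 0
        have hxabs : |x| = x := abs_of_pos hxp
        have htx : t - x < 0 := by
          have : t ≤ |t| := le_abs_self t
          rw [hxabs] at hx; linarith
        have hfx : f x = x ^ α - (x - t) ^ α := by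
          simp only [hf_def]
          rw [Real.sign_of_neg htx, Real.sign_of_pos hxp, abs_of_neg htx,
            abs_of_pos hxp, neg_sub]
          ring
        rw [hfx]
        have ha : |x| / 2 ≤ x := by rw [hxabs] at hm ⊢; linarith
        have hb : |x| / 2 ≤ x - t := by
          have : t ≤ |t| := le_abs_self t
          rw [hxabs] at hx2 ⊢; linarith
        have := rpow_mvt hα0 (by simp only [hα_def]; linarith) hm ha hb
        calc |x ^ α - (x - t) ^ α| ≤ α * (|x| / 2) ^ (α - 1) * |x - (x - t)| := this
          _ = α * (|x| / 2) ^ (α - 1) * |t| := by congr 1; congr 1; ring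
      · -- x ≤ 0 ; since |x| > 0, x < 0
        have hxneg : x < 0 := lt_of_le_of_ne hxn (by rintro rfl; simp at hxpos)
        have hxabs : |x| = -x := abs_of_neg hxneg
        have htx : 0 < t - x := by
          have : -|t| ≤ t := neg_abs_le t
          rw [hxabs] at hx; linarith
        have hfx : f x = (t - x) ^ α - (-x) ^ α := by
          simp only [hf_def]
          rw [Real.sign_of_pos htx, Real.sign_of_neg hxneg, abs_of_pos htx,
            abs_of_neg hxneg]
          ring
        rw [hfx]
        have ha : |x| / 2 ≤ t - x := by
          have : -|t| ≤ t := neg_abs_le t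
          rw [hxabs] at hx2 ⊢; linarith
        have hb : |x| / 2 ≤ -x := by rw [hxabs] at hm ⊢; linarith
        have := rpow_mvt hα0 (by simp only [hα_def]; linarith) hm ha hb
        calc |(t - x) ^ α - (-x) ^ α| ≤ α * (|x| / 2) ^ (α - 1) * |(t - x) - (-x)| := this
          _ = α * (|x| / 2) ^ (α - 1) * |t| := by congr 1; congr 1; ring
    -- convert (|x|/2)^(α-1) to 2^(1-α) * |x|^(α-1)
    have hconv : (|x| / 2) ^ (α - 1) = (2:ℝ) ^ (1 - α) * |x| ^ (α - 1) := by
      rw [div_eq_mul_inv, Real.mul_rpow (abs_nonneg x) (by norm_num),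
        Real.inv_rpow (by norm_num : (0:ℝ) ≤ 2), ← Real.rpow_neg (by norm_num : (0:ℝ) ≤ 2),
        neg_sub]
      ring
    calc |f x| ≤ α * (|x| / 2) ^ (α - 1) * |t| := hbound
      _ = Ka * |x| ^ (α - 1) := by rw [hconv, hKa_def]; ring
  -- dominating function on the tails
  set g : ℝ → ℝ := fun x => (Ka * |x| ^ (α - 1)) ^ 2 with hg_def
  have hIoi : IntegrableOn g (Ioi R) volume := by
    have hexp : 2 * α - 2 < -1 := by simp only [hα_def]; linarith
    have h1 : IntegrableOn (fun x : ℝ => Ka ^ 2 * x ^ (2 * α - 2)) (Ioi R) volume :=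
      (integrableOn_Ioi_rpow_of_lt hexp hRpos).const_mul _
    apply h1.congr_fun _ measurableSet_Ioi
    intro x hx
    have hxpos : (0:ℝ) < x := lt_trans hRpos hx
    have e1 : (|x| ^ (α - 1)) ^ (2:ℕ) = x ^ (2 * α - 2) := by
      rw [abs_of_pos hxpos, ← Real.rpow_natCast (x ^ (α - 1)) 2,
        ← Real.rpow_mul hxpos.le]
      congr 1
      push_cast
      ring
    simp only [hg_def]
    rw [← e1, ← mul_pow]
  have hgeven : ∀ x : ℝ, g (-x) = g x := by
    intro x; simp only [hg_def, abs_neg]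
  have hIio : IntegrableOn g (Iio (-R)) volume := by
    have h1 : Integrable ((Ioi R).indicator g) volume :=
      (integrable_indicator_iff measurableSet_Ioi).2 hIoi
    have h2 : Integrable (fun x => (Ioi R).indicator g (-x)) volume := h1.comp_neg
    have h3 : (fun x => (Ioi R).indicator g (-x)) = (Iio (-R)).indicator g := by
      funext x
      by_cases hx : x < -R
      · rw [indicator_of_mem (show -x ∈ Ioi R by simp only [mem_Ioi]; linarith) g,
          indicator_of_mem (show x ∈ Iio (-R) from hx) g, hgeven]
      · have hx' : -R ≤ x := not_lt.1 hx
        rw [indicator_of_notMem (show -x ∉ Ioi R by simp only [mem_Ioi, not_lt]; linarith) g,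
          indicator_of_notMem (show x ∉ Iio (-R) from hx) g]
    rw [h3] at h2
    exact (integrable_indicator_iff measurableSet_Iio).1 h2
  -- integrability of f² on tails by domination
  have hmeas : AEStronglyMeasurable (fun x => f x ^ 2) volume :=
    (hcont.pow 2).aestronglyMeasurable
  have htail : ∀ s : Set ℝ, MeasurableSet s → (∀ x ∈ s, R ≤ |x|) →
      IntegrableOn g s volume → IntegrableOn (fun x => f x ^ 2) s volume := by
    intro s hs hsub hg
    apply Integrable.mono hg hmeas.restrict
    apply ae_restrict_of_forall_mem hs
    intro x hx
    have hkey := key x (hsub x hx)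
    have h1 : ‖f x ^ 2‖ = |f x| ^ 2 := by
      rw [Real.norm_eq_abs, abs_of_nonneg (sq_nonneg _), sq_abs]
    have h2 : |f x| ^ 2 ≤ (Ka * |x| ^ (α - 1)) ^ 2 :=
      pow_le_pow_left₀ (abs_nonneg _) hkey 2
    rw [h1]
    calc |f x| ^ 2 ≤ (Ka * |x| ^ (α - 1)) ^ 2 := h2
      _ ≤ ‖g x‖ := by rw [hg_def, Real.norm_eq_abs]; exact le_abs_self _
  have hIoiF : IntegrableOn (fun x => f x ^ 2) (Ioi R) volume :=
    htail _ measurableSet_Ioi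
      (fun x hx => le_trans (le_of_lt hx) (le_abs_self x)) hIoi
  have hIioF : IntegrableOn (fun x => f x ^ 2) (Iio (-R)) volume :=
    htail _ measurableSet_Iio
      (fun x hx => by
        have : x < -R := hx
        rw [abs_of_neg (by linarith : x < 0)]; linarith) hIio
  have hIccF : IntegrableOn (fun x => f x ^ 2) (Icc (-R) R) volume :=
    (hcont.pow 2).integrableOn_Icc
  have hunion : IntegrableOn (fun x => f x ^ 2)
      (Icc (-R) R ∪ (Iio (-R) ∪ Ioi R)) volume :=
    hIccF.union (hIioF.union hIoiF)
  rw [← integrableOn_univ]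
  apply hunion.mono_set
  intro x _
  rcases lt_or_ge x (-R) with h1 | h1
  · exact Or.inr (Or.inl h1)
  · rcases le_or_gt x R with h2 | h2
    · exact Or.inl ⟨h1, h2⟩
    · exact Or.inr (Or.inr h2)
end
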